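/- Let D be a digraph on {1,…,n}, u a vertex of outdegree 1 with outgoing arc u→v, and A ∈ Q⁰(D) with a_{u,u} = 0 and a_{u,v} ≠ 0. Then the matrix A(u,v) obtained by deleting row u and column v equals the Schur complement A/A[u,v], and its nullity equals the nullity of A. -/

import Mathlib

open Matrix

private lemma sum_split {n : ℕ} (v : Fin n) (f : Fin n → ℝ) :
    ∑ j, f j = f v + ∑ j : {j : Fin n // j ≠ v}, f j := by
  rw [← Finset.add_sum_erase _ f (Finset.mem_univ v)]
  congr 1
  exact (Finset.sum_subtype (p := fun j => j ≠ v) (Finset.univ.erase v)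
    (fun j => by simp [Finset.mem_erase]) f)

private def extLin {n : ℕ} (v : Fin n) :
    ({j : Fin n // j ≠ v} → ℝ) →ₗ[ℝ] (Fin n → ℝ) where
  toFun y j := if h : j = v then 0 else y ⟨j, h⟩
  map_add' y z := by ext j; by_cases h : j = v <;> simp [h]
  map_smul' c y := by ext j; by_cases h : j = v <;> simp [h]

theorem delete_row_col_eq_schur {n : ℕ} (D : Fin n → Fin n → Prop)
    (u v : Fin n) (huv : D u v) (hout : ∀ w, D u w → w = v)
    (A : Matrix (Fin n) (Fin n) ℝ)
    (hQ0 : ∀ i j, i ≠ j → ¬ D i j → A i j = 0)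
    (hAuu : A u u = 0) (hAuv : A u v ≠ 0) :
    (A.submatrix (fun i : {i : Fin n // i ≠ u} => (i : Fin n))
        (fun j : {j : Fin n // j ≠ v} => (j : Fin n)) =
      Matrix.of fun (i : {i : Fin n // i ≠ u}) (j : {j : Fin n // j ≠ v}) =>
        A i j - A i v * (A u v)⁻¹ * A u j) ∧
    Module.finrank ℝ (LinearMap.ker (Matrix.mulVecLin
      (A.submatrix (fun i : {i : Fin n // i ≠ u} => (i : Fin n))
        (fun j : {j : Fin n // j ≠ v} => (j : Fin n))))) =
      Module.finrank ℝ (LinearMap.ker (Matrix.mulVecLin A)) := by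
  have hrow : ∀ j, j ≠ v → A u j = 0 := by
    intro j hj
    by_cases hju : j = u
    · subst hju; exact hAuu
    · exact hQ0 u j (Ne.symm hju) (fun h => hj (hout j h))
  set B := A.submatrix (fun i : {i : Fin n // i ≠ u} => (i : Fin n))
      (fun j : {j : Fin n // j ≠ v} => (j : Fin n)) with hB
  refine ⟨?_, ?_⟩
  · ext i j
    simp [hB, hrow j j.2]
  · -- kernel isomorphism
    have hmul : ∀ (x : Fin n → ℝ) (i : Fin n),
        A.mulVec x i = A i v * x v + ∑ j : {j : Fin n // j ≠ v}, A i j * x j := by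
      intro x i
      rw [Matrix.mulVec, dotProduct, sum_split v]
    have hBmul : ∀ (y : {j : Fin n // j ≠ v} → ℝ) (i : {i : Fin n // i ≠ u}),
        B.mulVec y i = ∑ j : {j : Fin n // j ≠ v}, A i j * y j := by
      intro y i
      rw [Matrix.mulVec, dotProduct]
      rfl
    have hxv : ∀ x ∈ LinearMap.ker A.mulVecLin, x v = 0 := by
      intro x hx
      have h0 : A.mulVec x u = 0 := congrFun hx u
      rw [hmul] at h0
      have : ∑ j : {j : Fin n // j ≠ v}, A u j * x j = 0 := by
        apply Finset.sum_eq_zero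
        intro j _
        rw [hrow j j.2, zero_mul]
      rw [this, add_zero] at h0
      exact (mul_eq_zero.mp h0).resolve_left hAuv
    -- forward: restriction
    have hf : ∀ x ∈ LinearMap.ker A.mulVecLin,
        (LinearMap.funLeft ℝ ℝ (Subtype.val : {j : Fin n // j ≠ v} → Fin n)) x ∈
          LinearMap.ker B.mulVecLin := by
      intro x hx
      ext i
      have h0 : A.mulVec x i = 0 := congrFun hx i
      rw [hmul, hxv x hx, mul_zero, zero_add] at h0
      simpa [hBmul, LinearMap.funLeft] using h0
    -- backward: extension by zero
    have hgv : ∀ (y : {j : Fin n // j ≠ v} → ℝ), extLin v y v = 0 := by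
      intro y; simp [extLin]
    have hgj : ∀ (y : {j : Fin n // j ≠ v} → ℝ) (j : {j : Fin n // j ≠ v}),
        extLin v y j = y j := by
      intro y j; simp [extLin, j.2]
    have hg : ∀ y ∈ LinearMap.ker B.mulVecLin, extLin v y ∈ LinearMap.ker A.mulVecLin := by
      intro y hy
      ext i
      rw [Matrix.mulVecLin_apply, hmul, hgv, mul_zero, zero_add]
      by_cases hiu : i = u
      · subst hiu
        simp only [Pi.zero_apply]
        apply Finset.sum_eq_zero
        intro j _
        rw [hrow j j.2, zero_mul]
      · have h0 : B.mulVec y ⟨i, hiu⟩ = 0 := congrFun hy ⟨i, hiu⟩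
        rw [hBmul] at h0
        simpa [hgj] using h0
    let f : LinearMap.ker A.mulVecLin →ₗ[ℝ] LinearMap.ker B.mulVecLin :=
      LinearMap.codRestrict _
        ((LinearMap.funLeft ℝ ℝ Subtype.val).comp (LinearMap.ker A.mulVecLin).subtype)
        (fun x => hf x x.2)
    let g : LinearMap.ker B.mulVecLin →ₗ[ℝ] LinearMap.ker A.mulVecLin :=
      LinearMap.codRestrict _
        ((extLin v).comp (LinearMap.ker B.mulVecLin).subtype)
        (fun y => hg y y.2)
    have E : LinearMap.ker B.mulVecLin ≃ₗ[ℝ] LinearMap.ker A.mulVecLin :=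
      LinearEquiv.ofLinear g f
        (by
          ext x j
          by_cases h : j = v
          · subst h
            simpa [f, g, extLin] using (hxv x x.2).symm
          · exact hgj (fun k => (x : Fin n → ℝ) k.1) ⟨j, h⟩)
        (by
          ext y j
          exact hgj y.1 j)
    exact E.finrank_eq
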